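/- Let f : M^n → ℤ be submodular on a diamond M and define f'(t) = (n² + 1)·f(t) + ρ(t)(2n − ρ(t)). Then f' is strictly submodular, and every minimizer of f' is a minimizer of f. -/

import Mathlib

set_option linter.unreachableTactic false
set_option linter.unusedTactic false
set_option linter.unusedVariables false

inductive Dia (A : Type) : Type where
  | bot : Dia A
  | atom : A → Dia A
  | top : Dia A
  deriving DecidableEq

namespace Dia

variable {A : Type} [DecidableEq A]

instance : Lattice (Dia A) where
  le x y := x = bot ∨ y = top ∨ x = y
  le_refl x := Or.inr (Or.inr rfl)
  le_trans x y z hxy hyz := by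
    rcases hxy with h | h | h <;> rcases hyz with h' | h' | h' <;> simp_all
  le_antisymm x y hxy hyx := by
    rcases hxy with h | h | h <;> rcases hyx with h' | h' | h' <;> simp_all
  sup x y := if x = bot then y else if y = bot then x else if x = y then x else top
  inf x y := if x = top then y else if y = top then x else if x = y then x else bot
  le_sup_left x y := by
    try dsimp only
    split_ifs <;> (try simp_all) <;> (try split_ifs) <;> (try simp_all)
  le_sup_right x y := by
    try dsimp only
    split_ifs <;> (try simp_all) <;> (try split_ifs) <;> (try simp_all)
  sup_le x y z hxz hyz := by
    try dsimp only
    rcases hxz with h | h | h <;> rcases hyz with h' | h' | h' <;> split_ifs <;> (try simp_all) <;> (try split_ifs) <;> (try simp_all)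
  inf_le_left x y := by
    try dsimp only
    split_ifs <;> (try simp_all) <;> (try split_ifs) <;> (try simp_all)
  inf_le_right x y := by
    try dsimp only
    split_ifs <;> (try simp_all) <;> (try split_ifs) <;> (try simp_all)
  le_inf x y z hxy hxz := by
    try dsimp only
    rcases hxy with h | h | h <;> rcases hxz with h' | h' | h' <;> split_ifs <;> (try simp_all) <;> (try split_ifs) <;> (try simp_all)

instance : BoundedOrder (Dia A) where
  top := top
  bot := bot
  le_top x := Or.inr (Or.inl rfl)
  bot_le x := Or.inl rfl

def drank : Dia A → ℕ
  | bot => 0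
  | atom _ => 1
  | top => 2

noncomputable def gval (v : A → ℝ) : Dia A → ℝ
  | bot => 0
  | atom a => v a
  | top => sSup {r : ℝ | ∃ a a' : A, a ≠ a' ∧ r = v a + v a'}

end Dia

variable {A : Type} [DecidableEq A] {n : ℕ}

noncomputable def evalD (x : Fin n → A → ℝ) (y : Fin n → Dia A) : ℝ :=
  ∑ i, Dia.gval (x i) (y i)

def Submod (f : (Fin n → Dia A) → ℝ) : Prop :=
  ∀ a b, f (a ⊓ b) + f (a ⊔ b) ≤ f a + f b

def InP (f : (Fin n → Dia A) → ℝ) (x : Fin n → A → ℝ) : Prop :=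
  ∀ y, evalD x y ≤ f y

def UnifiedRow (v : A → ℝ) : Prop :=
  ∃ p : A, (∀ a b : A, a ≠ p → b ≠ p → v a = v b) ∧ ∀ a, v a ≤ v p

def Unified (x : Fin n → A → ℝ) : Prop := ∀ i, UnifiedRow (x i)


/-- Integer-valued rank of a tuple in M^n. -/
def rkZ (t : Fin n → Dia A) : ℤ := ∑ i, (Dia.drank (t i) : ℤ)

lemma dia_drank_mono {x y : Dia A} (h : x ≤ y) : Dia.drank x ≤ Dia.drank y := by
  rcases h with h | h | h
  · subst h; simp [Dia.drank]
  · subst h; cases x <;> simp [Dia.drank]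
  · subst h; exact le_refl _

lemma dia_drank_strict {x y : Dia A} (h : x ≤ y) (hne : x ≠ y) :
    Dia.drank x < Dia.drank y := by
  rcases h with h | h | h <;> (try subst h) <;> (try cases x) <;> (try cases y) <;>
    simp_all [Dia.drank]

lemma dia_rank_modular (a b : Dia A) :
    Dia.drank (a ⊓ b) + Dia.drank (a ⊔ b) = Dia.drank a + Dia.drank b := by
  have hinf : a ⊓ b = if a = Dia.top then b else if b = Dia.top then a
      else if a = b then a else Dia.bot := rfl
  have hsup : a ⊔ b = if a = Dia.bot then b else if b = Dia.bot then a
      else if a = b then a else Dia.top := rfl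
  rw [hinf, hsup]
  cases a <;> cases b <;> simp_all [Dia.drank] <;> split_ifs <;> simp_all [Dia.drank]

lemma rkZ_modular (t u : Fin n → Dia A) :
    rkZ (t ⊓ u) + rkZ (t ⊔ u) = rkZ t + rkZ u := by
  unfold rkZ
  rw [← Finset.sum_add_distrib, ← Finset.sum_add_distrib]
  refine Finset.sum_congr rfl fun i _ => ?_
  have := dia_rank_modular (t i) (u i)
  have h1 : (t ⊓ u) i = t i ⊓ u i := rfl
  have h2 : (t ⊔ u) i = t i ⊔ u i := rfl
  rw [h1, h2]
  push_cast
  exact_mod_cast congrArg (fun k : ℕ => (k : ℤ)) this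

lemma rkZ_strict_lt {t u : Fin n → Dia A} (h : ¬ t ≤ u) : rkZ (t ⊓ u) < rkZ t := by
  have hne : t ⊓ u ≠ t := fun he => h (inf_eq_left.mp he)
  obtain ⟨i, hi⟩ : ∃ i, (t ⊓ u) i ≠ t i := by
    by_contra hc
    push_neg at hc
    exact hne (funext hc)
  unfold rkZ
  refine Finset.sum_lt_sum (fun j _ => ?_) ⟨i, Finset.mem_univ i, ?_⟩
  · exact_mod_cast dia_drank_mono (inf_le_left : (t ⊓ u) j ≤ t j)
  · exact_mod_cast dia_drank_strict (inf_le_left : (t ⊓ u) i ≤ t i) hi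

lemma rkZ_nonneg (t : Fin n → Dia A) : 0 ≤ rkZ t :=
  Finset.sum_nonneg fun i _ => Int.ofNat_nonneg _

lemma rkZ_le (t : Fin n → Dia A) : rkZ t ≤ 2 * n := by
  unfold rkZ
  calc ∑ i, (Dia.drank (t i) : ℤ) ≤ ∑ _i : Fin n, (2 : ℤ) := by
        refine Finset.sum_le_sum fun i _ => ?_
        cases t i <;> simp [Dia.drank]
    _ = 2 * n := by simp [mul_comm]

/-- f'(t) = (n²+1)·f(t) + ρ(t)(2n − ρ(t)) is strictly submodular
and every minimizer of f' minimizes f. -/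
theorem stmt12 [Fintype A] (hA : 3 ≤ Fintype.card A)
    (f : (Fin n → Dia A) → ℤ)
    (hf : ∀ a b : Fin n → Dia A, f (a ⊓ b) + f (a ⊔ b) ≤ f a + f b)
    (f' : (Fin n → Dia A) → ℤ)
    (hf' : ∀ t, f' t = ((n : ℤ) ^ 2 + 1) * f t + rkZ t * (2 * n - rkZ t)) :
    (∀ t u : Fin n → Dia A, ¬ t ≤ u → ¬ u ≤ t →
        f' (t ⊓ u) + f' (t ⊔ u) < f' t + f' u) ∧
    (∀ t : Fin n → Dia A, (∀ u, f' t ≤ f' u) → ∀ u, f t ≤ f u) := by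
  have hgub : ∀ t : Fin n → Dia A, rkZ t * (2 * n - rkZ t) ≤ (n : ℤ) ^ 2 := by
    intro t
    nlinarith [sq_nonneg (rkZ t - n)]
  have hglb : ∀ t : Fin n → Dia A, 0 ≤ rkZ t * (2 * n - rkZ t) := by
    intro t
    have h1 := rkZ_nonneg t
    have h2 := rkZ_le t
    nlinarith
  constructor
  · intro t u htu hut
    have hmod := rkZ_modular t u
    have h1 : rkZ (t ⊓ u) < rkZ t := rkZ_strict_lt htu
    have h2 : rkZ (t ⊓ u) < rkZ u := by
      have : rkZ (u ⊓ t) < rkZ u := rkZ_strict_lt hut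
      rwa [inf_comm] at this
    clear htu hut
    have hsub := hf t u
    have hn : (0 : ℤ) ≤ (n : ℤ) ^ 2 + 1 := by positivity
    rw [hf' (t ⊓ u), hf' (t ⊔ u), hf' t, hf' u]
    set s := rkZ (t ⊓ u)
    set S := rkZ (t ⊔ u)
    set a := rkZ t
    set b := rkZ u
    have hS : S = a + b - s := by omega
    have hq : s * (2 * n - s) + S * (2 * n - S) ≤
        a * (2 * n - a) + b * (2 * n - b) - 2 := by
      have key : a * (2 * n - a) + b * (2 * n - b) -
          (s * (2 * n - s) + S * (2 * n - S)) = 2 * ((a - s) * (b - s)) := by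
        rw [hS]; ring
      have h3 : (1 : ℤ) * 1 ≤ (a - s) * (b - s) :=
        mul_le_mul (by omega) (by omega) (by omega) (by omega)
      linarith [key, h3]
    nlinarith [mul_le_mul_of_nonneg_left hsub hn]
  · intro t hmin u
    have h1 := hmin u
    rw [hf' t, hf' u] at h1
    have h2 := hglb t
    have h3 := hgub u
    nlinarith [h1, h2, h3]
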